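/- For every natural number n, one has the integer identity 8 · ∑_{i=0}^{n} (2·binom(n + 1, i + 2) + binom(n + 1, i + 1)) · (−4)^i = 4n + 5 − (−3)^{n+1}. Equivalently, 2·∑_{i=0}^{n} e_{n−i}(2, 1^{n+1}) · (−4)^i = (4n + 5 − (−3)^{n+1})/4, where e_k(2, 1^{n+1}) denotes the k-th elementary symmetric function of the multiset consisting of 2 and n + 1 copies of 1. (This computes the degree of the top Chern class of a smooth del Pezzo variety of dimension n and degree two, realized as a degree-4 weighted hypersurface in ℙ(2, 1, …, 1).) -/
import Mathlib

open Finset Multiset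

lemma esymm_replicate_one (m k : ℕ) :
    (Multiset.replicate m (1 : ℤ)).esymm k = (m.choose k : ℤ) := by
  rw [Multiset.esymm]
  have h : ∀ t ∈ Multiset.powersetCard k (Multiset.replicate m (1 : ℤ)),
      t.prod = 1 := by
    intro t ht
    rw [Multiset.mem_powersetCard] at ht
    have : t = Multiset.replicate t.card 1 :=
      Multiset.eq_replicate_card.2 fun b hb =>
        Multiset.eq_of_mem_replicate (Multiset.mem_of_le ht.1 hb)
    rw [this, Multiset.prod_replicate, one_pow]
  rw [Multiset.map_congr rfl h, Multiset.map_const', Multiset.sum_replicate,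
    Multiset.card_powersetCard, Multiset.card_replicate]
  simp

lemma esymm_cons_succ (a : ℤ) (s : Multiset ℤ) (k : ℕ) :
    (a ::ₘ s).esymm (k + 1) = s.esymm (k + 1) + a * s.esymm k := by
  rw [Multiset.esymm, Multiset.powersetCard_cons, Multiset.map_add, Multiset.sum_add,
    Multiset.map_map, Multiset.esymm, Multiset.esymm]
  congr 1
  rw [← Multiset.sum_map_mul_left]
  congr 1
  ext t
  simp [Multiset.prod_cons]

lemma esymm_M (n k : ℕ) :
    (({2} : Multiset ℤ) + Multiset.replicate (n + 1) 1).esymm (k + 1)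
      = ((n + 1).choose (k + 1) : ℤ) + 2 * ((n + 1).choose k : ℤ) := by
  rw [Multiset.singleton_add, esymm_cons_succ, esymm_replicate_one, esymm_replicate_one]

lemma esymm_M' (n i : ℕ) (hi : i ≤ n) :
    (({2} : Multiset ℤ) + Multiset.replicate (n + 1) 1).esymm (n - i)
      = ((n + 1).choose (i + 1) : ℤ) + 2 * ((n + 1).choose (i + 2) : ℤ) := by
  rcases eq_or_lt_of_le hi with rfl | hlt
  · have h0 : (({2} : Multiset ℤ) + Multiset.replicate (i + 1) 1).esymm 0 = 1 := by
      simp [Multiset.esymm]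
    rw [Nat.sub_self, h0, Nat.choose_self, Nat.choose_eq_zero_of_lt (by omega)]
    norm_num
  · have h1 : n - i = (n - i - 1) + 1 := by omega
    rw [h1, esymm_M]
    have h2 : n - i - 1 + 1 = (n + 1) - (i + 1) := by omega
    have h3 : n - i - 1 = (n + 1) - (i + 2) := by omega
    rw [h2, h3, Nat.choose_symm (by omega), Nat.choose_symm (by omega)]

lemma sumA (n : ℕ) :
    (-4 : ℤ) * ∑ i ∈ Finset.range (n + 1), ((n + 1).choose (i + 1) : ℤ) * (-4) ^ i
      = (-3) ^ (n + 1) - 1 := by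
  have hb : ((-4 : ℤ) + 1) ^ (n + 1)
      = ∑ k ∈ Finset.range (n + 2), (-4 : ℤ) ^ k * 1 ^ (n + 1 - k) * (n + 1).choose k :=
    add_pow (-4 : ℤ) 1 (n + 1)
  rw [Finset.sum_range_succ'] at hb
  simp only [one_pow, mul_one, pow_zero, one_mul, Nat.choose_zero_right, Nat.cast_one] at hb
  have : ((-4 : ℤ) + 1) = -3 := by norm_num
  rw [this] at hb
  rw [Finset.mul_sum]
  rw [show ((-3 : ℤ)) ^ (n + 1) - 1
      = ∑ i ∈ Finset.range (n + 1), (-4 : ℤ) ^ (i + 1) * (n + 1).choose (i + 1) by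
    omega]
  refine Finset.sum_congr rfl fun i _ => by ring

lemma sumAB (n : ℕ) :
    ∑ i ∈ Finset.range (n + 1), ((n + 1).choose (i + 1) : ℤ) * (-4) ^ i
      = (n + 1 : ℤ)
        - 4 * ∑ i ∈ Finset.range (n + 1), ((n + 1).choose (i + 2) : ℤ) * (-4) ^ i := by
  have hz : ∑ i ∈ Finset.range (n + 1), ((n + 1).choose (i + 2) : ℤ) * (-4) ^ i
      = ∑ i ∈ Finset.range n, ((n + 1).choose (i + 2) : ℤ) * (-4) ^ i := by
    rw [Finset.sum_range_succ, Nat.choose_eq_zero_of_lt (by omega)]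
    simp
  rw [hz, Finset.sum_range_succ']
  simp only [pow_zero, mul_one, Nat.choose_one_right]
  push_cast
  rw [Finset.mul_sum]
  have : ∀ i ∈ Finset.range n, ((n + 1).choose (i + 1 + 1) : ℤ) * (-4) ^ (i + 1)
      = -(4 * (((n + 1).choose (i + 2) : ℤ) * (-4) ^ i)) := fun i _ => by ring
  rw [Finset.sum_congr rfl this, Finset.sum_neg_distrib, Nat.choose_one_right]
  push_cast
  ring

theorem delPezzo_degree_two_chern (n : ℕ) :
    8 * ∑ i ∈ Finset.range (n + 1),
        (2 * ((n + 1).choose (i + 2) : ℤ) + ((n + 1).choose (i + 1) : ℤ)) * (-4) ^ i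
      = 4 * (n : ℤ) + 5 - (-3) ^ (n + 1) ∧
    2 * (∑ i ∈ Finset.range (n + 1),
        (((({2} : Multiset ℤ) + Multiset.replicate (n + 1) 1).esymm (n - i) : ℤ) : ℚ)
          * (-4) ^ i)
      = (4 * (n : ℚ) + 5 - (-3) ^ (n + 1)) / 4 := by
  set A := ∑ i ∈ Finset.range (n + 1), ((n + 1).choose (i + 1) : ℤ) * (-4) ^ i with hAdef
  set B := ∑ i ∈ Finset.range (n + 1), ((n + 1).choose (i + 2) : ℤ) * (-4) ^ i with hBdef
  have hA := sumA n
  have hAB := sumAB n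
  rw [← hAdef] at hA
  rw [← hAdef, ← hBdef] at hAB
  constructor
  · have hsplit : ∑ i ∈ Finset.range (n + 1),
        (2 * ((n + 1).choose (i + 2) : ℤ) + ((n + 1).choose (i + 1) : ℤ)) * (-4) ^ i
        = 2 * B + A := by
      rw [hAdef, hBdef, Finset.mul_sum, ← Finset.sum_add_distrib]
      exact Finset.sum_congr rfl fun i _ => by ring
    rw [hsplit]
    linear_combination (-1 : ℤ) * hA + 4 * hAB
  · have hsum : ∑ i ∈ Finset.range (n + 1),
        (((({2} : Multiset ℤ) + Multiset.replicate (n + 1) 1).esymm (n - i) : ℤ) : ℚ)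
          * (-4) ^ i
        = ((A + 2 * B : ℤ) : ℚ) := by
      push_cast
      rw [hAdef, hBdef]
      push_cast
      rw [Finset.mul_sum, ← Finset.sum_add_distrib]
      refine Finset.sum_congr rfl fun i hi => ?_
      rw [esymm_M' n i (by simpa using Nat.lt_succ_iff.mp (Finset.mem_range.mp hi))]
      push_cast
      ring
    rw [hsum]
    have hA' : (-4 : ℚ) * (A : ℚ) = (-3) ^ (n + 1) - 1 := by
      have h := congrArg (fun z : ℤ => (z : ℚ)) hA
      push_cast at h
      linarith
    have hAB' : (A : ℚ) = (n : ℚ) + 1 - 4 * (B : ℚ) := by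
      have h := congrArg (fun z : ℤ => (z : ℚ)) hAB
      push_cast at h
      linarith
    push_cast
    field_simp
    linear_combination (-1 : ℚ) * hA' + 4 * hAB'
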